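/- Let $\rho$ be a Rouquier $e$-core for $d \ge 1$ witnessed by the abacus display $\mathsf{Ab}_N(\rho)$, let $1 \le r \le d$, and let $\mu \in \mathrm{Par}_e(\rho, r-1)$ and $\lambda \in \mathrm{Par}_e(\rho, r)$ with $\mu \subset \lambda$. Then the top-left corner box of the skew diagram $\lambda \setminus \mu$ has residue $-N + e\mathbb{Z}$ (given that $\lambda \setminus \mu$ is a translate of the Young diagram of an $e$-hook partition, by the Chuang–Kessar lemma). -/

import Mathlib

/-- The `e`-residue of a box `(a, b)` (0-indexed), i.e. `b - a` mod `e`. -/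
def boxRes (e : ℕ) (c : ℕ × ℕ) : ZMod e := (((c.2 : ℤ) - (c.1 : ℤ)) : ℤ)

/-- Two boxes are adjacent if they differ by one in exactly one coordinate. -/
def BoxAdj (c c' : ℕ × ℕ) : Prop :=
  (c.1 = c'.1 ∧ (c.2 + 1 = c'.2 ∨ c'.2 + 1 = c.2)) ∨
  (c.2 = c'.2 ∧ (c.1 + 1 = c'.1 ∨ c'.1 + 1 = c.1))

/-- A finite set of boxes is connected. -/
def BoxConnected (S : Finset (ℕ × ℕ)) : Prop :=
  ∀ c ∈ S, ∀ c' ∈ S,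
    Relation.ReflTransGen (fun u v => u ∈ S ∧ v ∈ S ∧ BoxAdj u v) c c'

/-- `S` contains no 2×2 square. -/
def NoTwoByTwo (S : Finset (ℕ × ℕ)) : Prop :=
  ¬ ∃ a b : ℕ, (a, b) ∈ S ∧ (a + 1, b) ∈ S ∧ (a, b + 1) ∈ S ∧ (a + 1, b + 1) ∈ S

/-- An `e`-hook: a connected skew diagram of size `e` containing no 2×2 square. -/
def IsEHook (e : ℕ) (S : Finset (ℕ × ℕ)) : Prop :=
  S.card = e ∧ BoxConnected S ∧ NoTwoByTwo S

/-- An `e`-core: a partition from which no `e`-hook can be removed. -/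
def IsECore (e : ℕ) (ρ : YoungDiagram) : Prop :=
  ¬ ∃ ν : YoungDiagram, ν ≤ ρ ∧ IsEHook e (ρ.cells \ ν.cells)

/-- `λ ∈ Par_e(ρ, r)`: the partition `λ` has `e`-core `ρ` and `e`-weight `r`. -/
def HasCoreAndWeight (e r : ℕ) (ρ lam : YoungDiagram) : Prop :=
  IsECore e ρ ∧ ∃ chain : Fin (r + 1) → YoungDiagram,
    chain 0 = ρ ∧ chain (Fin.last r) = lam ∧
    ∀ j : Fin r, chain j.castSucc ≤ chain j.succ ∧
      IsEHook e ((chain j.succ).cells \ (chain j.castSucc).cells)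

/-- The set of beta-numbers of a partition with at most `N` parts. -/
def betaSet (N : ℕ) (lam : YoungDiagram) : Finset ℕ :=
  (Finset.range N).image fun j => lam.rowLen j + (N - 1 - j)

/-- The number of beads on runner `i` of the abacus display `Ab_N(λ)`. -/
def runnerBeads (e N i : ℕ) (lam : YoungDiagram) : ℕ :=
  ((betaSet N lam).filter fun m => m % e = i).card

/-- `ρ` is a Rouquier core for `d`, witnessed by the abacus display `Ab_N(ρ)`:
for all `0 ≤ i ≤ e - 2` runner `i + 1` carries at least `d - 1` more beads than
runner `i`. -/
def IsRouquierWitness (e d N : ℕ) (ρ : YoungDiagram) : Prop :=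
  ρ.colLen 0 ≤ N ∧
    ∀ i : ℕ, i + 1 ≤ e - 1 →
      runnerBeads e N i ρ + (d - 1) ≤ runnerBeads e N (i + 1) ρ

/-- The cells of the `e`-hook partition `(k, 1^{e-k})` (0-indexed). -/
def hookCells (e k : ℕ) : Finset (ℕ × ℕ) :=
  ((Finset.range k).image fun j => (0, j)) ∪
    ((Finset.range (e + 1 - k)).image fun a => (a, 0))

namespace RK
open Finset

def bFn (N : ℕ) (lam : YoungDiagram) (j : ℕ) : ℕ := lam.rowLen j + (N - 1 - j)

lemma mem_betaSet {N : ℕ} {lam : YoungDiagram} {m : ℕ} :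
    m ∈ betaSet N lam ↔ ∃ j, j < N ∧ bFn N lam j = m := by
  simp [betaSet, bFn, Finset.mem_image]

lemma bFn_lt {N : ℕ} {lam : YoungDiagram} {j j' : ℕ} (h : j < j') (h' : j' < N) :
    bFn N lam j' < bFn N lam j := by
  have := lam.rowLen_anti j j' h.le
  unfold bFn; omega

lemma rowLen_le_of_le {ν ξ : YoungDiagram} (h : ν ≤ ξ) (j : ℕ) :
    ν.rowLen j ≤ ξ.rowLen j := by
  by_contra hlt
  push_neg at hlt
  have h1 : (j, ξ.rowLen j) ∈ ν := YoungDiagram.mem_iff_lt_rowLen.2 hlt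
  have h2 : (j, ξ.rowLen j) ∈ ξ := h h1
  have := YoungDiagram.mem_iff_lt_rowLen.1 h2
  omega

lemma mem_diff_iff {ν ξ : YoungDiagram} (hle : ν ≤ ξ) {x y : ℕ} :
    (x, y) ∈ ξ.cells \ ν.cells ↔ ν.rowLen x ≤ y ∧ y < ξ.rowLen x := by
  simp only [Finset.mem_sdiff, YoungDiagram.mem_cells, YoungDiagram.mem_iff_lt_rowLen, not_lt]
  tauto

lemma row_lt_colLen {ξ : YoungDiagram} {x y : ℕ} (h : (x, y) ∈ ξ) : x < ξ.colLen 0 :=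
  YoungDiagram.mem_iff_lt_colLen.1 (ξ.up_left_mem le_rfl (Nat.zero_le _) h)

section paths
variable {S : Finset (ℕ × ℕ)}

lemma path_rows {u v : ℕ × ℕ} (hu : u ∈ S)
    (h : Relation.ReflTransGen (fun a b => a ∈ S ∧ b ∈ S ∧ BoxAdj a b) u v) :
    ∀ j, u.1 ≤ j → j ≤ v.1 → ∃ c, (j, c) ∈ S := by
  induction h with
  | refl =>
    intro j h1 h2
    have : j = u.1 := le_antisymm h2 h1
    subst this
    exact ⟨u.2, by simpa using hu⟩
  | @tail w v hp step ih =>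
    intro j h1 h2
    obtain ⟨hw, hv, hadj⟩ := step
    have hv1 : v.1 ≤ w.1 + 1 := by
      rcases hadj with ⟨h, _⟩ | ⟨_, h | h⟩ <;> omega
    by_cases hj : j ≤ w.1
    · exact ih j h1 hj
    · have : j = v.1 := by omega
      subst this
      exact ⟨v.2, by simpa using hv⟩

lemma path_below {j0 : ℕ} (hcut : ∀ y, (j0, y) ∈ S → (j0 + 1, y) ∉ S)
    {u v : ℕ × ℕ}
    (h : Relation.ReflTransGen (fun a b => a ∈ S ∧ b ∈ S ∧ BoxAdj a b) u v)
    (hu : u.1 ≤ j0) : v.1 ≤ j0 := by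
  induction h with
  | refl => exact hu
  | @tail w v hp step ih =>
    obtain ⟨hw, hv, hadj⟩ := step
    rcases hadj with ⟨h, _⟩ | ⟨h, h' | h'⟩
    · omega
    · -- vertical step down: v.1 = w.1 + 1
      by_cases hwj : w.1 = j0
      · exfalso
        have hw' : (j0, w.2) ∈ S := by rwa [← hwj, Prod.mk.eta]
        have hv' : (j0 + 1, w.2) ∈ S := by
          have : v = (j0 + 1, w.2) := by
            apply Prod.ext <;> simp [← h', ← h, hwj]
          rwa [this] at hv
        exact hcut _ hw' hv'
      · omega
    · omega

end paths

lemma tele (f g : ℕ → ℕ) : ∀ n a,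
    (∀ j, a ≤ j → j < a + n → g j + 1 = f (j + 1)) →
    (∀ j, a ≤ j → j ≤ a + n → g j ≤ f j) →
    (∑ j ∈ Finset.Icc a (a + n), (f j - g j)) + g (a + n) = f a + n := by
  intro n
  induction n with
  | zero =>
    intro a _ hle
    have := hle a le_rfl (by omega)
    simp
    omega
  | succ n ih =>
    intro a hov hle
    rw [show a + (n + 1) = (a + n) + 1 by omega, Finset.sum_Icc_succ_top (by omega)]
    have h1 := ih a (fun j hj1 hj2 => hov j hj1 (by omega)) (fun j hj1 hj2 => hle j hj1 (by omega))
    have h2 := hov (a + n) (by omega) (by omega)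
    have h3 := hle ((a + n) + 1) (by omega) (by omega)
    omega

lemma diff_card {ν ξ : YoungDiagram} (hle : ν ≤ ξ) {a a' : ℕ} (haa : a ≤ a')
    (hin : ∀ j, a ≤ j → j ≤ a' → ν.rowLen j < ξ.rowLen j)
    (hout : ∀ j, j < a ∨ a' < j → ξ.rowLen j = ν.rowLen j)
    (hov : ∀ j, a ≤ j → j < a' → ν.rowLen j + 1 = ξ.rowLen (j + 1)) :
    (ξ.cells \ ν.cells).card + ν.rowLen a' = ξ.rowLen a + (a' - a) := by
  classical
  have hSeq : ξ.cells \ ν.cells =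
      (Finset.Icc a a').biUnion
        (fun j => (Finset.Ico (ν.rowLen j) (ξ.rowLen j)).image fun y => (j, y)) := by
    ext ⟨x, y⟩
    simp only [Finset.mem_biUnion, Finset.mem_Icc, Finset.mem_image, Finset.mem_Ico]
    rw [mem_diff_iff hle]
    constructor
    · rintro ⟨h1, h2⟩
      refine ⟨x, ?_, y, ⟨h1, h2⟩, rfl⟩
      by_contra hc
      have := hout x (by omega)
      omega
    · rintro ⟨j, hj, y', hy', heq⟩
      obtain ⟨rfl, rfl⟩ : j = x ∧ y' = y := by
        constructor <;> [exact congrArg Prod.fst heq; exact congrArg Prod.snd heq]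
      exact hy'
  have hdisj : ∀ j1 ∈ Finset.Icc a a', ∀ j2 ∈ Finset.Icc a a', j1 ≠ j2 →
      Disjoint ((Finset.Ico (ν.rowLen j1) (ξ.rowLen j1)).image fun y => (j1, y))
        ((Finset.Ico (ν.rowLen j2) (ξ.rowLen j2)).image fun y => (j2, y)) := by
    intro j1 _ j2 _ hne
    simp only [Finset.disjoint_left, Finset.mem_image]
    rintro c ⟨y1, _, rfl⟩ ⟨y2, _, hc⟩
    exact hne (congrArg Prod.fst hc).symm
  have hcard : (ξ.cells \ ν.cells).card = ∑ j ∈ Finset.Icc a a', (ξ.rowLen j - ν.rowLen j) := by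
    rw [hSeq, Finset.card_biUnion hdisj]
    apply Finset.sum_congr rfl
    intro j _
    rw [Finset.card_image_of_injective _ (fun y1 y2 h => congrArg Prod.snd h), Nat.card_Ico]
  have htel := tele ξ.rowLen ν.rowLen (a' - a) a
    (fun j h1 h2 => hov j h1 (by omega))
    (fun j h1 h2 => (hin j h1 (by omega)).le)
  rw [show a + (a' - a) = a' by omega] at htel
  omega

lemma hook_step {e N : ℕ} (he : 1 ≤ e) {ν ξ : YoungDiagram} (hle : ν ≤ ξ)
    (hN : ξ.colLen 0 ≤ N) (hhook : IsEHook e (ξ.cells \ ν.cells)) :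
    ∃ m, m ∈ betaSet N ν ∧ (m + e) ∉ betaSet N ν ∧
      betaSet N ξ = insert (m + e) ((betaSet N ν).erase m) := by
  classical
  obtain ⟨hcard, hconn, h22⟩ := hhook
  set S := ξ.cells \ ν.cells with hs
  have hSne : S.Nonempty := Finset.card_pos.1 (by omega)
  have hIne : (S.image Prod.fst).Nonempty := hSne.image _
  set a := (S.image Prod.fst).min' hIne with ha
  set a' := (S.image Prod.fst).max' hIne with ha'
  obtain ⟨ua, hua, huaa⟩ : ∃ w ∈ S, w.1 = a := by
    have := (S.image Prod.fst).min'_mem hIne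
    rw [← ha] at this
    simpa [Finset.mem_image, eq_comm] using this
  obtain ⟨ub, hub, hubb⟩ : ∃ w ∈ S, w.1 = a' := by
    have := (S.image Prod.fst).max'_mem hIne
    rw [← ha'] at this
    simpa [Finset.mem_image, eq_comm] using this
  have hbounds : ∀ w ∈ S, a ≤ w.1 ∧ w.1 ≤ a' := fun w hw =>
    ⟨Finset.min'_le _ _ (Finset.mem_image_of_mem _ hw),
     Finset.le_max' _ _ (Finset.mem_image_of_mem _ hw)⟩
  have haa : a ≤ a' := by
    have := hbounds ua hua
    omega
  have hrows : ∀ j, a ≤ j → j ≤ a' → ν.rowLen j < ξ.rowLen j := by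
    intro j h1 h2
    obtain ⟨c, hc⟩ := path_rows hua (hconn ua hua ub hub) j (by omega) (by omega)
    have := (mem_diff_iff hle).1 hc
    omega
  have hout : ∀ j, j < a ∨ a' < j → ξ.rowLen j = ν.rowLen j := by
    intro j hj
    rcases le_or_gt (ξ.rowLen j) (ν.rowLen j) with h | h
    · exact le_antisymm h (rowLen_le_of_le hle j)
    · exfalso
      have hmem : (j, ν.rowLen j) ∈ S := (mem_diff_iff hle).2 ⟨le_rfl, h⟩
      have := hbounds _ hmem
      simp at this
      omega
  have hov : ∀ j, a ≤ j → j < a' → ν.rowLen j + 1 = ξ.rowLen (j + 1) := by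
    intro j h1 h2
    have hj1 : ν.rowLen j < ξ.rowLen j := hrows j h1 (by omega)
    have hj2 : ν.rowLen (j + 1) < ξ.rowLen (j + 1) := hrows (j + 1) (by omega) (by omega)
    have hanti1 := ν.rowLen_anti j (j + 1) (by omega)
    have hanti2 := ξ.rowLen_anti j (j + 1) (by omega)
    have hle1 : ξ.rowLen (j + 1) ≤ ν.rowLen j + 1 := by
      by_contra hc
      push_neg at hc
      refine h22 ⟨j, ν.rowLen j, ?_, ?_, ?_, ?_⟩ <;> refine (mem_diff_iff hle).2 ⟨?_, ?_⟩ <;> omega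
    have hge1 : ν.rowLen j < ξ.rowLen (j + 1) := by
      by_contra hc
      push_neg at hc
      have hcut : ∀ y, (j, y) ∈ S → (j + 1, y) ∉ S := by
        intro y hy hy'
        have e1 := (mem_diff_iff hle).1 hy
        have e2 := (mem_diff_iff hle).1 hy'
        omega
      have hu1 : (j, ν.rowLen j) ∈ S := (mem_diff_iff hle).2 ⟨le_rfl, hj1⟩
      have hu2 : (j + 1, ν.rowLen (j + 1)) ∈ S := (mem_diff_iff hle).2 ⟨le_rfl, hj2⟩
      have := path_below hcut (hconn _ hu1 _ hu2) (by simp)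
      simp at this
    omega
  have ha'N : a' < N := by
    have hb : ub ∈ ξ.cells := (Finset.mem_sdiff.1 hub).1
    have : (ub.1, ub.2) ∈ ξ := by rwa [Prod.mk.eta, ← YoungDiagram.mem_cells]
    have := row_lt_colLen this
    omega
  have hkey : e + ν.rowLen a' = ξ.rowLen a + (a' - a) := by
    have := diff_card hle haa hrows hout hov
    rw [← hs] at this
    omega
  -- helper equalities on beta numbers
  have hEq1 : ∀ x, x < a ∨ a' < x → bFn N ξ x = bFn N ν x := by
    intro x hx
    unfold bFn
    rw [hout x hx]
  have hEq2 : ∀ x, a ≤ x → x < a' → bFn N ν x = bFn N ξ (x + 1) := by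
    intro x h1 h2
    have := hov x h1 h2
    unfold bFn
    omega
  have hm : bFn N ν a' + e = bFn N ξ a := by
    unfold bFn
    omega
  refine ⟨bFn N ν a', mem_betaSet.2 ⟨a', ha'N, rfl⟩, ?_, ?_⟩
  · intro hmem
    obtain ⟨x, hx, hbx⟩ := mem_betaSet.1 hmem
    rcases lt_or_ge x a with h | h
    · have h1 := hEq1 x (Or.inl h)
      have h2 : a < N := by omega
      rcases eq_or_lt_of_le (show x ≤ a by omega) with rfl | hlt
      · omega
      · have := bFn_lt (lam := ξ) hlt h2
        omega
    · rcases lt_or_ge x a' with h' | h'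
      · have h1 := hEq2 x h h'
        have h2 := bFn_lt (lam := ξ) (show a < x + 1 by omega) (show x + 1 < N by omega)
        omega
      · rcases eq_or_lt_of_le h' with rfl | hgt
        · omega
        · have := bFn_lt (lam := ν) hgt hx
          omega
  · ext q
    simp only [Finset.mem_insert, Finset.mem_erase]
    constructor
    · intro hq
      obtain ⟨x, hx, rfl⟩ := mem_betaSet.1 hq
      rcases lt_or_ge x a with h | h
      · right
        have h1 := hEq1 x (Or.inl h)
        have h2 := bFn_lt (lam := ξ) h (show a < N by omega)
        refine ⟨by omega, mem_betaSet.2 ⟨x, hx, h1.symm⟩⟩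
      · rcases eq_or_lt_of_le h with rfl | hgt
        · left
          omega
        · rcases le_or_gt x a' with h' | h'
          · right
            have h1 := hEq2 (x - 1) (by omega) (by omega)
            rw [show x - 1 + 1 = x by omega] at h1
            have h2 : x - 1 < a' := by omega
            have h3 := bFn_lt (lam := ν) h2 (show a' < N from ha'N)
            exact ⟨by omega, mem_betaSet.2 ⟨x - 1, by omega, h1⟩⟩
          · right
            have h1 := hEq1 x (Or.inr h')
            have h2 := bFn_lt (lam := ν) h' hx
            exact ⟨by omega, mem_betaSet.2 ⟨x, hx, h1.symm⟩⟩
    · rintro (rfl | ⟨hne, hq⟩)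
      · exact mem_betaSet.2 ⟨a, by omega, by omega⟩
      · obtain ⟨x, hx, rfl⟩ := mem_betaSet.1 hq
        rcases lt_or_ge x a with h | h
        · exact mem_betaSet.2 ⟨x, hx, (hEq1 x (Or.inl h)).symm ▸ rfl⟩
        · rcases lt_or_ge x a' with h' | h'
          · exact mem_betaSet.2 ⟨x + 1, by omega, (hEq2 x h h').symm⟩
          · rcases eq_or_lt_of_le h' with rfl | hgt
            · omega
            · exact mem_betaSet.2 ⟨x, hx, (hEq1 x (Or.inr hgt)).symm ▸ rfl⟩

lemma rowLen_zero_of_colLen_le {lam : YoungDiagram} {j : ℕ} (h : lam.colLen 0 ≤ j) :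
    lam.rowLen j = 0 := by
  by_contra hz
  have h1 : (j, 0) ∈ lam := YoungDiagram.mem_iff_lt_rowLen.2 (Nat.pos_of_ne_zero hz)
  have := YoungDiagram.mem_iff_lt_colLen.1 h1
  omega

lemma colLen_le_of_le {ν ξ : YoungDiagram} (h : ν ≤ ξ) :
    ν.colLen 0 ≤ ξ.colLen 0 := by
  by_contra hlt
  push_neg at hlt
  have h1 : (ξ.colLen 0, 0) ∈ ν := YoungDiagram.mem_iff_lt_colLen.2 hlt
  have h2 : (ξ.colLen 0, 0) ∈ ξ := h h1
  have := YoungDiagram.mem_iff_lt_colLen.1 h2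
  omega

end RK

namespace RK
open Finset

/-- minimal sum of `n` distinct naturals -/
def tri (n : ℕ) : ℕ := ∑ x ∈ Finset.range n, x

lemma tri_succ (n : ℕ) : tri (n + 1) = tri n + n := Finset.sum_range_succ _ _

lemma card_le_max_succ {F : Finset ℕ} (hne : F.Nonempty) : F.card ≤ F.max' hne + 1 := by
  have : F ⊆ Finset.range (F.max' hne + 1) := by
    intro x hx
    simp only [Finset.mem_range]
    exact Nat.lt_succ_of_le (F.le_max' x hx)
  simpa using Finset.card_le_card this

lemma tri_le_sum_aux (n : ℕ) : ∀ F : Finset ℕ, F.card = n → tri F.card ≤ ∑ x ∈ F, x := by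
  induction n with
  | zero => intro F hn; simp [hn, tri]
  | succ n ih =>
    intro F hn
    have hne : F.Nonempty := Finset.card_pos.1 (by omega)
    set M := F.max' hne with hM
    have hMm : M ∈ F := F.max'_mem hne
    have h1 : F.card ≤ M + 1 := card_le_max_succ hne
    have h2 : (F.erase M).card = n := by rw [Finset.card_erase_of_mem hMm, hn]; omega
    have h3 := ih (F.erase M) h2
    rw [h2] at h3
    have h4 : M + ∑ x ∈ F.erase M, x = ∑ x ∈ F, x := Finset.add_sum_erase F (fun x => x) hMm
    rw [hn, tri_succ]
    omega

lemma tri_le_sum (F : Finset ℕ) : tri F.card ≤ ∑ x ∈ F, x :=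
  tri_le_sum_aux F.card F rfl

/-- LB1: `t ∈ F` forces extra height. -/
lemma tri_bound_mem {F : Finset ℕ} {t : ℕ} (ht : t ∈ F) :
    tri F.card + t + 1 ≤ (∑ x ∈ F, x) + F.card := by
  have hne : F.Nonempty := ⟨t, ht⟩
  have hc : 1 ≤ F.card := Finset.card_pos.2 hne
  have h2 : (F.erase t).card = F.card - 1 := Finset.card_erase_of_mem ht
  have h3 := tri_le_sum (F.erase t)
  rw [h2] at h3
  have h4 : t + ∑ x ∈ F.erase t, x = ∑ x ∈ F, x := Finset.add_sum_erase F (fun x => x) ht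
  have h5 : tri F.card = tri (F.card - 1) + (F.card - 1) := by
    obtain ⟨c, hcc⟩ : ∃ c, F.card = c + 1 := ⟨F.card - 1, by omega⟩
    rw [hcc]; simp [tri_succ]
  omega

/-- LB2: `t ∉ F` forces extra height. -/
lemma tri_bound_not_mem {F : Finset ℕ} {t : ℕ} (ht : t ∉ F) :
    tri F.card + F.card ≤ (∑ x ∈ F, x) + t := by
  classical
  set g : ℕ → ℕ := fun x => if t < x then x - 1 else x with hg
  have hinj : ∀ x ∈ F, ∀ y ∈ F, g x = g y → x = y := by
    intro x hx y hy hxy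
    have hxt : x ≠ t := fun h => ht (h ▸ hx)
    have hyt : y ≠ t := fun h => ht (h ▸ hy)
    simp only [hg] at hxy
    split_ifs at hxy <;> omega
  have hcard : (F.image g).card = F.card := Finset.card_image_of_injOn hinj
  have h0 : tri F.card ≤ ∑ x ∈ F.image g, x := by rw [← hcard]; exact tri_le_sum _
  have h1 : ∑ x ∈ F.image g, x = ∑ x ∈ F, g x := Finset.sum_image hinj
  have h2 : ∑ x ∈ F, x = ∑ x ∈ F, (g x + if t < x then 1 else 0) := by
    apply Finset.sum_congr rfl
    intro x hx
    have hxt : x ≠ t := fun h => ht (h ▸ hx)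
    simp only [hg]
    split_ifs <;> omega
  rw [Finset.sum_add_distrib] at h2
  have h3 : ∑ x ∈ F, (if t < x then 1 else 0) = (F.filter (fun x => t < x)).card := by
    rw [Finset.card_eq_sum_ones, Finset.sum_filter]
  have h4 : (F.filter (fun x => ¬ t < x)).card ≤ t := by
    have : F.filter (fun x => ¬ t < x) ⊆ Finset.range t := by
      intro x hx
      simp only [Finset.mem_filter, not_lt] at hx
      have hxt : x ≠ t := fun h => ht (h ▸ hx.1)
      simp only [Finset.mem_range]
      omega
    simpa using Finset.card_le_card this
  have h5 := Finset.card_filter_add_card_filter_not (s := F) (p := fun x => t < x)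
  omega

/-- A predecessor-closed finset of naturals is an initial segment. -/
lemma pred_closed_eq_range {F : Finset ℕ} (h : ∀ s, s + 1 ∈ F → s ∈ F) :
    F = Finset.range F.card := by
  classical
  have hdc' : ∀ u t, t + u ∈ F → t ∈ F := by
    intro u
    induction u with
    | zero => intro t ht; simpa using ht
    | succ u ih =>
      intro t ht
      exact h t (ih (t+1) (by rw [show t + 1 + u = t + (u+1) by omega]; exact ht))
  have hdc : ∀ s ∈ F, ∀ t ≤ s, t ∈ F := fun s hs t hts =>
    hdc' (s - t) t (by rw [show t + (s - t) = s by omega]; exact hs)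
  ext x
  simp only [Finset.mem_range]
  constructor
  · intro hx
    have : Finset.range (x+1) ⊆ F := by
      intro y hy
      exact hdc x hx y (by simpa using Nat.lt_succ_iff.1 (Finset.mem_range.1 hy))
    have := Finset.card_le_card this
    simpa using this
  · intro hx
    by_contra hxF
    have : F ⊆ Finset.range x := by
      intro y hy
      simp only [Finset.mem_range]
      by_contra hyx
      exact hxF (hdc y hy x (by omega))
    have := Finset.card_le_card this
    simp at this
    omega

lemma sum_pred_closed {F : Finset ℕ} (h : ∀ s, s + 1 ∈ F → s ∈ F) :
    ∑ x ∈ F, x = tri F.card := by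
  conv_lhs => rw [pred_closed_eq_range h]
  rfl


end RK
namespace RK
open Finset

lemma exists_subdiagram (ξ : YoungDiagram) (f : ℕ → ℕ) (hanti : Antitone f)
    (hf : ∀ j, f j ≤ ξ.rowLen j) :
    ∃ ν : YoungDiagram, ν ≤ ξ ∧ ∀ j, ν.rowLen j = f j := by
  classical
  have hls : IsLowerSet (↑(ξ.cells.filter (fun c => c.2 < f c.1)) : Set (ℕ × ℕ)) := by
    intro c c' hcc hc
    simp only [Finset.coe_filter, Set.mem_setOf_eq] at hc ⊢
    obtain ⟨h1, h2⟩ := hc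
    refine ⟨ξ.isLowerSet hcc h1, ?_⟩
    have e1 : c'.1 ≤ c.1 := hcc.1
    have e2 : c'.2 ≤ c.2 := hcc.2
    have := hanti e1
    omega
  refine ⟨⟨ξ.cells.filter (fun c => c.2 < f c.1), hls⟩, ?_, ?_⟩
  · exact Finset.filter_subset _ _
  · intro x
    set ν : YoungDiagram := ⟨ξ.cells.filter (fun c => c.2 < f c.1), hls⟩ with hν
    have hmem : ∀ y, (x, y) ∈ ν ↔ y < f x := by
      intro y
      show (x, y) ∈ ν.cells ↔ _
      simp only [hν, Finset.mem_filter, YoungDiagram.mem_cells]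
      constructor
      · exact fun h => h.2
      · intro h
        exact ⟨YoungDiagram.mem_iff_lt_rowLen.2 (by have := hf x; omega), h⟩
    apply le_antisymm
    · by_contra hc
      push_neg at hc
      have : (x, f x) ∈ ν := YoungDiagram.mem_iff_lt_rowLen.2 hc
      have := (hmem _).1 this
      omega
    · by_contra hc
      push_neg at hc
      have : (x, ν.rowLen x) ∈ ν := (hmem _).2 hc
      have := YoungDiagram.mem_iff_lt_rowLen.1 this
      omega

lemma boxAdj_symm : Symmetric BoxAdj := by
  intro u v h
  unfold BoxAdj at *
  tauto

lemma build_hook {e N : ℕ} (he : 1 ≤ e) (ξ : YoungDiagram) (hN : ξ.colLen 0 ≤ N)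
    {p : ℕ} (hp : p ∈ betaSet N ξ) (hpe : e ≤ p) (hgap : p - e ∉ betaSet N ξ) :
    ∃ ν : YoungDiagram, ν ≤ ξ ∧ IsEHook e (ξ.cells \ ν.cells) := by
  classical
  obtain ⟨A, hAN, hpA⟩ := mem_betaSet.1 hp
  have hZ : ∀ x, x < N → ξ.rowLen x = 0 → ∀ q, q ≤ N - 1 - x → q ∈ betaSet N ξ := by
    intro x hx hx0 q hq
    refine mem_betaSet.2 ⟨N - 1 - q, by omega, ?_⟩
    have h1 : x ≤ N - 1 - q := by omega
    have h2 : ξ.rowLen (N - 1 - q) = 0 :=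
      Nat.le_zero.1 (hx0 ▸ ξ.rowLen_anti x (N - 1 - q) h1)
    unfold bFn
    omega
  set FS := (Finset.range N).filter (fun j => p - e < bFn N ξ j) with hFS
  have hFSne : FS.Nonempty := ⟨A, by
    simp only [hFS, Finset.mem_filter, Finset.mem_range]
    exact ⟨hAN, by omega⟩⟩
  set a' := FS.max' hFSne with ha'def
  have ha'mem := FS.max'_mem hFSne
  rw [← ha'def] at ha'mem
  simp only [hFS, Finset.mem_filter, Finset.mem_range] at ha'mem
  obtain ⟨ha'N, hpa'⟩ := ha'mem
  have hAa' : A ≤ a' := by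
    apply Finset.le_max'
    simp only [hFS, Finset.mem_filter, Finset.mem_range]
    exact ⟨hAN, by omega⟩
  have hnext : ∀ j, a' < j → j < N → bFn N ξ j < p - e := by
    intro j h1 h2
    have hj : j ∉ FS := fun hj => absurd (Finset.le_max' FS j hj) (by omega)
    simp only [hFS, Finset.mem_filter, Finset.mem_range, not_and, not_lt] at hj
    have h3 := hj h2
    rcases eq_or_lt_of_le h3 with h4 | h4
    · exact absurd (mem_betaSet.2 ⟨j, h2, h4⟩) hgap
    · exact h4
  have hbanti : ∀ j j', j ≤ j' → j' < N → bFn N ξ j' ≤ bFn N ξ j := by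
    intro j j' h1 h2
    rcases eq_or_lt_of_le h1 with rfl | h3
    · exact le_rfl
    · exact (bFn_lt h3 h2).le
  have hz : ∀ j, A ≤ j → j ≤ a' → 1 ≤ ξ.rowLen j := by
    intro j h1 h2
    by_contra hc
    push_neg at hc
    have hj0 : ξ.rowLen j = 0 := by omega
    have hb : p - e < bFn N ξ j := lt_of_lt_of_le hpa' (hbanti j a' h2 ha'N)
    have hbv : bFn N ξ j = N - 1 - j := by unfold bFn; omega
    exact hgap (hZ j (by omega) hj0 (p - e) (by omega))
  have hpa'2 : N - 1 - a' ≤ p - e := by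
    rcases eq_or_lt_of_le (show a' + 1 ≤ N by omega) with heq | hlt
    · omega
    · have := hnext (a' + 1) (by omega) hlt
      unfold bFn at this
      omega
  have hAp : ξ.rowLen A + (N - 1 - A) = p := hpA
  have hba' : p - e + 1 ≤ ξ.rowLen a' + (N - 1 - a') := hpa'
  set f : ℕ → ℕ := fun j =>
    if j < A then ξ.rowLen j
    else if j < a' then ξ.rowLen (j + 1) - 1
    else if j = a' then p - e - (N - 1 - a')
    else ξ.rowLen j with hfdef
  have hf_lt : ∀ j, j < A → f j = ξ.rowLen j := by intro j h; simp [hfdef, h]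
  have hf_mid : ∀ j, A ≤ j → j < a' → f j = ξ.rowLen (j + 1) - 1 := by
    intro j h1 h2; simp [hfdef, h2, Nat.not_lt.2 h1]
  have hf_a' : f a' = p - e - (N - 1 - a') := by
    simp [hfdef, Nat.not_lt.2 hAa', lt_irrefl]
  have hf_gt : ∀ j, a' < j → f j = ξ.rowLen j := by
    intro j h
    simp only [hfdef]
    rw [if_neg (by omega), if_neg (by omega), if_neg (by omega)]
  have hfa'_lt : f a' < ξ.rowLen a' := by rw [hf_a']; omega
  have hf_le : ∀ j, f j ≤ ξ.rowLen j := by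
    intro j
    rcases lt_or_ge j A with h | h
    · rw [hf_lt j h]
    · rcases lt_or_ge j a' with h' | h'
      · rw [hf_mid j h h']
        have := ξ.rowLen_anti j (j + 1) (by omega)
        omega
      · rcases eq_or_lt_of_le h' with rfl | h''
        · exact hfa'_lt.le
        · rw [hf_gt j h'']
  have hanti : Antitone f := by
    apply antitone_nat_of_succ_le
    intro j
    rcases lt_or_ge j A with h | h
    · have : f (j + 1) ≤ ξ.rowLen (j + 1) := hf_le (j + 1)
      have h2 := ξ.rowLen_anti j (j + 1) (by omega)
      rw [hf_lt j h]
      omega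
    · rcases lt_or_ge (j + 1) a' with h' | h'
      · rw [hf_mid j h (by omega), hf_mid (j + 1) (by omega) h']
        have := ξ.rowLen_anti (j + 1) (j + 1 + 1) (by omega)
        omega
      · rcases eq_or_lt_of_le h' with heq | h''
      -- h' : a' ≤ j + 1
        · -- a' = j + 1
          rw [hf_mid j h (by omega), ← heq, hf_a']
          have h3 := hz a' hAa' le_rfl
          omega
        · -- a' < j + 1, i.e. a' ≤ j
          rcases eq_or_lt_of_le (show a' ≤ j by omega) with heq2 | h3
          · rw [← heq2, hf_a', hf_gt (a' + 1) (by omega)]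
            rcases lt_or_ge (a' + 1) N with hN' | hN'
            · have := hnext (a' + 1) (by omega) hN'
              unfold bFn at this
              omega
            · have : ξ.rowLen (a' + 1) = 0 := rowLen_zero_of_colLen_le (by omega)
              omega
          · rw [hf_gt j h3, hf_gt (j + 1) (by omega)]
            exact ξ.rowLen_anti j (j + 1) (by omega)
  obtain ⟨ν, hνle, hνrl⟩ := exists_subdiagram ξ f hanti hf_le
  have hin : ∀ j, A ≤ j → j ≤ a' → ν.rowLen j < ξ.rowLen j := by
    intro j h1 h2
    rw [hνrl]
    rcases lt_or_ge j a' with h | h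
    · rw [hf_mid j h1 h]
      have h3 := hz (j + 1) (by omega) h
      have h4 := ξ.rowLen_anti j (j + 1) (by omega)
      omega
    · have : j = a' := by omega
      subst this
      exact hfa'_lt
  have hout : ∀ j, j < A ∨ a' < j → ξ.rowLen j = ν.rowLen j := by
    intro j hj
    rw [hνrl]
    rcases hj with h | h
    · exact (hf_lt j h).symm
    · exact (hf_gt j h).symm
  have hov : ∀ j, A ≤ j → j < a' → ν.rowLen j + 1 = ξ.rowLen (j + 1) := by
    intro j h1 h2
    rw [hνrl, hf_mid j h1 h2]
    have := hz (j + 1) (by omega) h2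
    omega
  have hcard := diff_card hνle hAa' hin hout hov
  rw [hνrl, hf_a'] at hcard
  have hcardS : (ξ.cells \ ν.cells).card = e := by omega
  set S := ξ.cells \ ν.cells with hSdef
  have hmemS : ∀ x y, (x, y) ∈ S ↔ (A ≤ x ∧ x ≤ a' ∧ f x ≤ y ∧ y < ξ.rowLen x) := by
    intro x y
    rw [hSdef, mem_diff_iff hνle, hνrl]
    constructor
    · rintro ⟨h1, h2⟩
      refine ⟨?_, ?_, h1, h2⟩ <;> by_contra hc <;> push_neg at hc
      · rw [hf_lt x hc] at h1; omega
      · rw [hf_gt x hc] at h1; omega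
    · rintro ⟨_, _, h3, h4⟩
      exact ⟨h3, h4⟩
  refine ⟨ν, hνle, hcardS, ?_, ?_⟩
  · -- BoxConnected
    set R := fun u v : ℕ × ℕ => u ∈ S ∧ v ∈ S ∧ BoxAdj u v with hR
    have hsym : Symmetric R := by
      intro u v ⟨h1, h2, h3⟩
      exact ⟨h2, h1, boxAdj_symm h3⟩
    have horiz : ∀ x, A ≤ x → x ≤ a' → ∀ n y, y = f x + n → y < ξ.rowLen x →
        Relation.ReflTransGen R (x, f x) (x, y) := by
      intro x hx1 hx2 n
      induction n with
      | zero =>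
        rintro y rfl h
        rw [Nat.add_zero]
      | succ n ih =>
        rintro y rfl hy
        refine Relation.ReflTransGen.tail (ih (f x + n) rfl (by omega)) ?_
        refine ⟨(hmemS _ _).2 ⟨hx1, hx2, by omega, by omega⟩,
          (hmemS _ _).2 ⟨hx1, hx2, by omega, hy⟩, ?_⟩
        left
        exact ⟨rfl, Or.inl (by omega)⟩
    have hrowne : ∀ x, A ≤ x → x ≤ a' → f x < ξ.rowLen x := by
      intro x h1 h2
      have := hin x h1 h2
      rwa [hνrl] at this
    have vert : ∀ x, A ≤ x → x < a' → Relation.ReflTransGen R (x, f x) (x + 1, f (x + 1)) := by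
      intro x h1 h2
      have hfx : f x = ξ.rowLen (x + 1) - 1 := hf_mid x h1 h2
      have hz1 := hz (x + 1) (by omega) h2
      have hm1 : (x, f x) ∈ S := (hmemS _ _).2 ⟨h1, by omega, le_rfl, hrowne x h1 (by omega)⟩
      have hm2 : (x + 1, f x) ∈ S := by
        refine (hmemS _ _).2 ⟨by omega, by omega, hanti (by omega : x ≤ x + 1), by omega⟩
      have step1 : Relation.ReflTransGen R (x, f x) (x + 1, f x) :=
        Relation.ReflTransGen.single ⟨hm1, hm2, Or.inr ⟨rfl, Or.inl rfl⟩⟩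
      have step2 : Relation.ReflTransGen R (x + 1, f (x + 1)) (x + 1, f x) :=
        horiz (x + 1) (by omega) (by omega) (f x - f (x + 1)) (f x)
          (by have := hanti (by omega : x ≤ x + 1); omega) (by omega)
      exact step1.trans (haveI : Std.Symm R := ⟨fun _ _ h => hsym h⟩; Std.Symm.symm _ _ step2)
    have down : ∀ n x, A ≤ x → x + n = a' →
        Relation.ReflTransGen R (x, f x) (a', f a') := by
      intro n
      induction n with
      | zero =>
        intro x h1 h2
        rw [show x = a' by omega]
      | succ n ih =>
        intro x h1 h2
        exact (vert x h1 (by omega)).trans (ih (x + 1) (by omega) (by omega))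
    have toanchor : ∀ c ∈ S, Relation.ReflTransGen R c (a', f a') := by
      rintro ⟨x, y⟩ hc
      obtain ⟨h1, h2, h3, h4⟩ := (hmemS _ _).1 hc
      have p1 : Relation.ReflTransGen R (x, y) (x, f x) :=
        (haveI : Std.Symm R := ⟨fun _ _ h => hsym h⟩; Std.Symm.symm _ _ (horiz x h1 h2 (y - f x) y (by omega) h4))
      exact p1.trans (down (a' - x) x h1 (by omega))
    intro c hc c' hc'
    exact (toanchor c hc).trans (haveI : Std.Symm R := ⟨fun _ _ h => hsym h⟩; Std.Symm.symm _ _ (toanchor c' hc'))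
  · -- NoTwoByTwo
    rintro ⟨x, y, h1, h2, h3, h4⟩
    obtain ⟨e1, e2, e3, e4⟩ := (hmemS _ _).1 h1
    obtain ⟨f1, f2, f3, f4⟩ := (hmemS _ _).1 h2
    obtain ⟨g1, g2, g3, g4⟩ := (hmemS _ _).1 h4
    have hx : x < a' := by omega
    have := hf_mid x e1 hx
    omega

lemma core_flush {e N : ℕ} (he : 1 ≤ e) {ξ : YoungDiagram} (hN : ξ.colLen 0 ≤ N)
    (hcore : IsECore e ξ) {p : ℕ} (hp : p ∈ betaSet N ξ) (hpe : e ≤ p) :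
    p - e ∈ betaSet N ξ := by
  by_contra hgap
  exact hcore (build_hook he ξ hN hp hpe hgap)

end RK

namespace RK
open Finset

/-- total height of beads -/
def hts (e N : ℕ) (lam : YoungDiagram) : ℕ := ∑ m ∈ betaSet N lam, m / e

lemma step_invariants {e N : ℕ} (he : 1 ≤ e) {ν ξ : YoungDiagram} (hle : ν ≤ ξ)
    (hN : ξ.colLen 0 ≤ N) (hhook : IsEHook e (ξ.cells \ ν.cells)) :
    (∀ i, runnerBeads e N i ξ = runnerBeads e N i ν) ∧ hts e N ξ = hts e N ν + 1 := by
  classical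
  obtain ⟨m, hm, hm2, hβ⟩ := hook_step he hle hN hhook
  have hme : m + e ∉ (betaSet N ν).erase m := fun h => hm2 (Finset.mem_of_mem_erase h)
  constructor
  · intro i
    unfold runnerBeads
    rw [hβ, Finset.filter_insert, Finset.filter_erase]
    have hmod : (m + e) % e = m % e := Nat.add_mod_right m e
    by_cases hcase : m % e = i
    · rw [if_pos (by rw [hmod]; exact hcase)]
      have hne : m + e ∉ ((betaSet N ν).filter fun x => x % e = i).erase m :=
        fun h => hm2 (Finset.mem_filter.1 (Finset.mem_of_mem_erase h)).1
      rw [Finset.card_insert_of_notMem hne]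
      rw [Finset.card_erase_of_mem
        (show m ∈ (betaSet N ν).filter (fun x => x % e = i) from
          Finset.mem_filter.2 ⟨hm, hcase⟩)]
      have : 1 ≤ ((betaSet N ν).filter fun x => x % e = i).card :=
        Finset.card_pos.2 ⟨m, Finset.mem_filter.2 ⟨hm, hcase⟩⟩
      omega
    · rw [if_neg (by rw [hmod]; exact hcase)]
      rw [Finset.erase_eq_of_notMem
        (show m ∉ (betaSet N ν).filter (fun x => x % e = i) from
          fun h => hcase (Finset.mem_filter.1 h).2)]
  · unfold hts
    rw [hβ, Finset.sum_insert hme]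
    have h1 : m / e + ∑ x ∈ (betaSet N ν).erase m, x / e = ∑ x ∈ betaSet N ν, x / e :=
      Finset.add_sum_erase _ (fun x => x / e) hm
    have h2 : (m + e) / e = m / e + 1 := by
      rw [Nat.add_div_right _ (by omega)]
    omega

lemma chain_le {w : ℕ} (ch : Fin (w + 1) → YoungDiagram)
    (hsteps : ∀ j : Fin w, ch j.castSucc ≤ ch j.succ) :
    ∀ n (hn : n ≤ w) j (hj : j ≤ n), ch ⟨j, by omega⟩ ≤ ch ⟨n, by omega⟩ := by
  intro n
  induction n with
  | zero => intro _ j hj; have : j = 0 := by omega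
            subst this; exact le_refl _
  | succ n ih =>
    intro hn j hj
    rcases eq_or_lt_of_le hj with rfl | h
    · exact le_refl _
    · have h1 : ch ⟨j, by omega⟩ ≤ ch ⟨n, by omega⟩ := ih (by omega) j (by omega)
      have h2 := hsteps ⟨n, by omega⟩
      exact h1.trans h2

lemma chain_invariants (e N w : ℕ) (he : 1 ≤ e) (ch : Fin (w + 1) → YoungDiagram)
    (hsteps : ∀ j : Fin w, ch j.castSucc ≤ ch j.succ ∧
      IsEHook e ((ch j.succ).cells \ (ch j.castSucc).cells))
    (hN : (ch (Fin.last w)).colLen 0 ≤ N) :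
    (∀ i, runnerBeads e N i (ch (Fin.last w)) = runnerBeads e N i (ch 0)) ∧
      hts e N (ch (Fin.last w)) = hts e N (ch 0) + w := by
  have hcolN : ∀ n (hn : n ≤ w), (ch ⟨n, by omega⟩).colLen 0 ≤ N := by
    intro n hn
    have := chain_le ch (fun j => (hsteps j).1) w le_rfl n hn
    exact le_trans (colLen_le_of_le this) hN
  have key : ∀ n (hn : n ≤ w),
      (∀ i, runnerBeads e N i (ch ⟨n, by omega⟩) = runnerBeads e N i (ch 0)) ∧
        hts e N (ch ⟨n, by omega⟩) = hts e N (ch 0) + n := by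
    intro n
    induction n with
    | zero =>
      intro _
      have h0 : (⟨0, by omega⟩ : Fin (w + 1)) = 0 := rfl
      rw [h0]
      exact ⟨fun i => rfl, by omega⟩
    | succ n ih =>
      intro hn
      obtain ⟨ih1, ih2⟩ := ih (by omega)
      have hstep := hsteps ⟨n, by omega⟩
      have hNn : ((⟨n, by omega⟩ : Fin w).succ.1 < w + 1) := by omega
      have hsi := step_invariants he hstep.1 (hcolN (n + 1) hn) hstep.2
      have hsi1 : ∀ i, runnerBeads e N i (ch ⟨n + 1, by omega⟩)
          = runnerBeads e N i (ch ⟨n, by omega⟩) := hsi.1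
      have hsi2 : hts e N (ch ⟨n + 1, by omega⟩) = hts e N (ch ⟨n, by omega⟩) + 1 := hsi.2
      exact ⟨fun i => (hsi1 i).trans (ih1 i), by omega⟩
  have hlast : (Fin.last w) = ⟨w, by omega⟩ := rfl
  rw [hlast]
  exact key w le_rfl

lemma colLen_step {e : ℕ} {ν ξ : YoungDiagram} (hle : ν ≤ ξ)
    (hcard : (ξ.cells \ ν.cells).card = e) : ξ.colLen 0 ≤ ν.colLen 0 + e := by
  classical
  have hmaps : ∀ x ∈ Finset.Ico (ν.colLen 0) (ξ.colLen 0), (x, 0) ∈ ξ.cells \ ν.cells := by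
    intro x hx
    rw [Finset.mem_Ico] at hx
    rw [Finset.mem_sdiff]
    constructor
    · rw [YoungDiagram.mem_cells]
      exact YoungDiagram.mem_iff_lt_colLen.2 hx.2
    · rw [YoungDiagram.mem_cells]
      intro hc
      have := YoungDiagram.mem_iff_lt_colLen.1 hc
      omega
  have hinj : Set.InjOn (fun x : ℕ => (x, (0 : ℕ))) ↑(Finset.Ico (ν.colLen 0) (ξ.colLen 0)) :=
    fun x _ y _ h => congrArg Prod.fst h
  have := Finset.card_le_card_of_injOn _ hmaps hinj
  rw [Nat.card_Ico, hcard] at this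
  omega

lemma chain_colLen (e w : ℕ) (ch : Fin (w + 1) → YoungDiagram)
    (hsteps : ∀ j : Fin w, ch j.castSucc ≤ ch j.succ ∧
      IsEHook e ((ch j.succ).cells \ (ch j.castSucc).cells)) :
    (ch (Fin.last w)).colLen 0 ≤ (ch 0).colLen 0 + w * e := by
  have key : ∀ n (hn : n ≤ w), (ch ⟨n, by omega⟩).colLen 0 ≤ (ch 0).colLen 0 + n * e := by
    intro n
    induction n with
    | zero =>
      intro _
      have h0 : (⟨0, by omega⟩ : Fin (w + 1)) = 0 := rfl
      rw [h0]
      omega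
    | succ n ih =>
      intro hn
      have h1 := ih (by omega)
      have hstep := hsteps ⟨n, by omega⟩
      have h2 : (ch ⟨n + 1, by omega⟩).colLen 0 ≤ (ch ⟨n, by omega⟩).colLen 0 + e :=
        colLen_step hstep.1 hstep.2.1
      have : (n + 1) * e = n * e + e := by ring
      omega
  exact key w le_rfl

lemma betaSet_add (e N : ℕ) (he : 1 ≤ e) (lam : YoungDiagram) (hN : lam.colLen 0 ≤ N) :
    betaSet (N + e) lam = ((betaSet N lam).image (· + e)) ∪ Finset.range e := by
  ext m
  rw [mem_betaSet]
  simp only [Finset.mem_union, Finset.mem_image, Finset.mem_range]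
  constructor
  · rintro ⟨j, hj, hb⟩
    rcases lt_or_ge j N with h | h
    · left
      refine ⟨bFn N lam j, mem_betaSet.2 ⟨j, h, rfl⟩, ?_⟩
      unfold bFn at hb ⊢
      omega
    · right
      have h0 : lam.rowLen j = 0 := rowLen_zero_of_colLen_le (by omega)
      unfold bFn at hb
      omega
  · rintro (⟨q, hq, rfl⟩ | hm)
    · obtain ⟨j, hj, hb⟩ := mem_betaSet.1 hq
      refine ⟨j, by omega, ?_⟩
      unfold bFn at hb ⊢
      omega
    · refine ⟨N + e - 1 - m, by omega, ?_⟩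
      have h0 : lam.rowLen (N + e - 1 - m) = 0 := rowLen_zero_of_colLen_le (by omega)
      unfold bFn
      omega

lemma runnerBeads_add (e N i : ℕ) (he : 1 ≤ e) (hi : i < e) (lam : YoungDiagram)
    (hN : lam.colLen 0 ≤ N) :
    runnerBeads e (N + e) i lam = runnerBeads e N i lam + 1 := by
  classical
  unfold runnerBeads
  rw [betaSet_add e N he lam hN, Finset.filter_union]
  have hdisj : Disjoint (((betaSet N lam).image (· + e)).filter fun m => m % e = i)
      ((Finset.range e).filter fun m => m % e = i) := by
    simp only [Finset.disjoint_left, Finset.mem_filter, Finset.mem_image, Finset.mem_range]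
    rintro x ⟨hx1, _⟩ ⟨hx2, _⟩
    obtain ⟨q, _, rfl⟩ := hx1
    omega
  rw [Finset.card_union_of_disjoint hdisj]
  have h1 : ((betaSet N lam).image (· + e)).filter (fun m => m % e = i) =
      ((betaSet N lam).filter fun m => m % e = i).image (· + e) := by
    ext x
    simp only [Finset.mem_filter, Finset.mem_image]
    constructor
    · rintro ⟨⟨q, hq, rfl⟩, hmod⟩
      exact ⟨q, ⟨hq, by rw [Nat.add_mod_right] at hmod; exact hmod⟩, rfl⟩
    · rintro ⟨q, ⟨hq, hmod⟩, rfl⟩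
      exact ⟨⟨q, hq, rfl⟩, by rw [Nat.add_mod_right]; exact hmod⟩
  have h2 : (Finset.range e).filter (fun m => m % e = i) = {i} := by
    ext x
    simp only [Finset.mem_filter, Finset.mem_range, Finset.mem_singleton]
    constructor
    · rintro ⟨hx, hmod⟩
      have := Nat.mod_eq_of_lt hx
      omega
    · rintro rfl
      exact ⟨hi, Nat.mod_eq_of_lt hi⟩
  rw [h1, h2, Finset.card_image_of_injective _ (add_left_injective e), Finset.card_singleton]

lemma witness_add (e d N : ℕ) (he : 1 ≤ e) (ρ : YoungDiagram)
    (h : IsRouquierWitness e d N ρ) : IsRouquierWitness e d (N + e) ρ := by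
  obtain ⟨h1, h2⟩ := h
  refine ⟨by omega, ?_⟩
  intro i hi
  rw [runnerBeads_add e N i he (by omega) ρ h1,
    runnerBeads_add e N (i + 1) he (by omega) ρ h1]
  have := h2 i hi
  omega

lemma witness_add_mul (e d N c : ℕ) (he : 1 ≤ e) (ρ : YoungDiagram)
    (h : IsRouquierWitness e d N ρ) : IsRouquierWitness e d (N + c * e) ρ := by
  induction c with
  | zero => simpa using h
  | succ c ih =>
    have := witness_add e d (N + c * e) he ρ ih
    rwa [show N + c * e + e = N + (c + 1) * e by ring] at this

/-- Two-runner lower bound for the bead-height sum. -/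
lemma two_runner_bound (e : ℕ) (he : 1 ≤ e) (B : Finset ℕ) (u v s D : ℕ)
    (hbead : e * s + u ∈ B) (hgap : e * s + v ∉ B) (hu : u < e) (hv : v < e)
    (hD : ((B.filter fun m => m % e = u).card) + D ≤ (B.filter fun m => m % e = v).card) :
    tri (B.filter fun m => m % e = u).card + tri (B.filter fun m => m % e = v).card + 1 + D ≤
      (∑ m ∈ B.filter (fun m => m % e = u), m / e) +
        ∑ m ∈ B.filter (fun m => m % e = v), m / e := by
  classical
  have hinj : ∀ w, ∀ x ∈ B.filter (fun m => m % e = w), ∀ y ∈ B.filter (fun m => m % e = w),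
      x / e = y / e → x = y := by
    intro w x hx y hy hxy
    rw [Finset.mem_filter] at hx hy
    have h1 := Nat.div_add_mod x e
    have h2 := Nat.div_add_mod y e
    rw [hx.2] at h1
    rw [hy.2] at h2
    rw [hxy] at h1
    omega
  set Fu := (B.filter (fun m => m % e = u)).image (· / e) with hFu
  set Fv := (B.filter (fun m => m % e = v)).image (· / e) with hFv
  have hcu : Fu.card = (B.filter fun m => m % e = u).card :=
    Finset.card_image_of_injOn (fun x hx y hy h => hinj u x hx y hy h)
  have hcv : Fv.card = (B.filter fun m => m % e = v).card :=
    Finset.card_image_of_injOn (fun x hx y hy h => hinj v x hx y hy h)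
  have hsu : ∑ x ∈ Fu, x = ∑ m ∈ B.filter (fun m => m % e = u), m / e :=
    Finset.sum_image (hinj u)
  have hsv : ∑ x ∈ Fv, x = ∑ m ∈ B.filter (fun m => m % e = v), m / e :=
    Finset.sum_image (hinj v)
  have hsFu2 : (e * s + u) / e = s := by
    rw [Nat.mul_add_div (by omega), Nat.div_eq_of_lt hu, Nat.add_zero]
  have hsFu : s ∈ Fu := by
    rw [hFu]
    exact Finset.mem_image.2 ⟨e * s + u,
      Finset.mem_filter.2 ⟨hbead, by rw [Nat.mul_add_mod]; exact Nat.mod_eq_of_lt hu⟩, hsFu2⟩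
  have hsFv : s ∉ Fv := by
    rw [hFv]
    simp only [Finset.mem_image, Finset.mem_filter]
    rintro ⟨x, ⟨hxB, hxmod⟩, hxdiv⟩
    have := Nat.div_add_mod x e
    rw [hxdiv, hxmod] at this
    rw [← this] at hxB
    exact hgap hxB
  have b1 := tri_bound_mem hsFu
  have b2 := tri_bound_not_mem hsFv
  rw [hcu] at b1
  rw [hcv] at b2
  rw [hsu] at b1
  rw [hsv] at b2
  omega

/-- Full lower bound over all runners. -/
lemma total_bound (e : ℕ) (he : 1 ≤ e) (B : Finset ℕ) (u v s D : ℕ)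
    (hbead : e * s + u ∈ B) (hgap : e * s + v ∉ B) (hu : u < e) (hv : v < e) (huv : u ≠ v)
    (hD : ((B.filter fun m => m % e = u).card) + D ≤ (B.filter fun m => m % e = v).card) :
    (∑ j ∈ Finset.range e, tri (B.filter fun m => m % e = j).card) + 1 + D ≤
      ∑ m ∈ B, m / e := by
  classical
  have hfib : ∑ j ∈ Finset.range e, ∑ m ∈ B.filter (fun m => m % e = j), m / e =
      ∑ m ∈ B, m / e :=
    Finset.sum_fiberwise_of_maps_to (fun m _ => Finset.mem_range.2 (Nat.mod_lt _ (by omega))) _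
  have hLB : ∀ j ∈ (Finset.range e).erase u |>.erase v,
      tri (B.filter fun m => m % e = j).card ≤ ∑ m ∈ B.filter (fun m => m % e = j), m / e := by
    intro j _
    have hinj : ∀ x ∈ B.filter (fun m => m % e = j), ∀ y ∈ B.filter (fun m => m % e = j),
        x / e = y / e → x = y := by
      intro x hx y hy hxy
      rw [Finset.mem_filter] at hx hy
      have h1 := Nat.div_add_mod x e
      have h2 := Nat.div_add_mod y e
      rw [hx.2] at h1
      rw [hy.2] at h2
      rw [hxy] at h1
      omega
    have hc : ((B.filter (fun m => m % e = j)).image (· / e)).card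
        = (B.filter fun m => m % e = j).card := Finset.card_image_of_injOn hinj
    have hs : ∑ x ∈ (B.filter (fun m => m % e = j)).image (· / e), x
        = ∑ m ∈ B.filter (fun m => m % e = j), m / e := Finset.sum_image hinj
    have := tri_le_sum ((B.filter (fun m => m % e = j)).image (· / e))
    rw [hc, hs] at this
    exact this
  have hmain := two_runner_bound e he B u v s D hbead hgap hu hv hD
  -- split the sums
  have hvmem : v ∈ (Finset.range e).erase u := Finset.mem_erase.2 ⟨huv.symm, Finset.mem_range.2 hv⟩
  have humem : u ∈ Finset.range e := Finset.mem_range.2 hu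
  have split : ∀ g : ℕ → ℕ, ∑ j ∈ Finset.range e, g j =
      g u + (g v + ∑ j ∈ ((Finset.range e).erase u).erase v, g j) := by
    intro g
    rw [Finset.add_sum_erase _ g hvmem, Finset.add_sum_erase _ g humem]
  rw [← hfib, split (fun j => ∑ m ∈ B.filter (fun m => m % e = j), m / e),
    split (fun j => tri (B.filter fun m => m % e = j).card)]
  have hsum := Finset.sum_le_sum hLB
  omega

end RK

namespace RK
open Finset

lemma core_hts (e N : ℕ) (he : 1 ≤ e) (ρ : YoungDiagram)
    (hflush : ∀ p, p ∈ betaSet N ρ → e ≤ p → p - e ∈ betaSet N ρ) :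
    hts e N ρ = ∑ j ∈ Finset.range e, tri (runnerBeads e N j ρ) := by
  classical
  unfold hts
  have hmap : ∀ m ∈ betaSet N ρ, m % e ∈ Finset.range e :=
    fun m _ => Finset.mem_range.2 (Nat.mod_lt m (by omega))
  rw [← Finset.sum_fiberwise_of_maps_to hmap (fun m => m / e)]
  apply Finset.sum_congr rfl
  intro j hj
  rw [Finset.mem_range] at hj
  have hinj : ∀ x ∈ (betaSet N ρ).filter (fun m => m % e = j),
      ∀ y ∈ (betaSet N ρ).filter (fun m => m % e = j), x / e = y / e → x = y := by
    intro x hx y hy hxy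
    rw [Finset.mem_filter] at hx hy
    have h1 := Nat.div_add_mod x e
    have h2 := Nat.div_add_mod y e
    rw [hx.2] at h1
    rw [hy.2] at h2
    rw [hxy] at h1
    omega
  have hs : ∑ x ∈ ((betaSet N ρ).filter (fun m => m % e = j)).image (· / e), x
      = ∑ m ∈ (betaSet N ρ).filter (fun m => m % e = j), m / e := Finset.sum_image hinj
  have hc : (((betaSet N ρ).filter (fun m => m % e = j)).image (· / e)).card
      = ((betaSet N ρ).filter (fun m => m % e = j)).card := Finset.card_image_of_injOn hinj
  have hpc : ∀ s, s + 1 ∈ ((betaSet N ρ).filter (fun m => m % e = j)).image (· / e) →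
      s ∈ ((betaSet N ρ).filter (fun m => m % e = j)).image (· / e) := by
    intro s hs1
    obtain ⟨m, hmf, hmd⟩ := Finset.mem_image.1 hs1
    obtain ⟨hmB, hmmod⟩ := Finset.mem_filter.1 hmf
    have hdm := Nat.div_add_mod m e
    rw [hmd, hmmod] at hdm
    have h1 : e * (s + 1) = e * s + e := by ring
    rw [h1] at hdm
    obtain ⟨P, hP⟩ : ∃ P, e * s = P := ⟨_, rfl⟩
    rw [hP] at hdm
    have hem : e ≤ m := by omega
    have hme : m - e = P + j := by omega
    have hf := hflush m hmB hem
    refine Finset.mem_image.2 ⟨m - e, Finset.mem_filter.2 ⟨hf, ?_⟩, ?_⟩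
    · rw [hme, ← hP, Nat.mul_add_mod, Nat.mod_eq_of_lt hj]
    · rw [hme, ← hP, Nat.mul_add_div (by omega), Nat.div_eq_of_lt hj, Nat.add_zero]
  rw [← hs, sum_pred_closed hpc, hc]
  rfl

lemma runner_chain {e d N : ℕ} {ρ : YoungDiagram} (hw : IsRouquierWitness e d N ρ) :
    ∀ u v, u < v → v < e → runnerBeads e N u ρ + (d - 1) ≤ runnerBeads e N v ρ := by
  intro u v
  induction v with
  | zero => intro huv _; exact absurd huv (Nat.not_lt_zero u)
  | succ v ih =>
    intro huv hv
    rcases eq_or_lt_of_le (Nat.lt_succ_iff.1 huv) with rfl | h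
    · exact hw.2 u (by omega)
    · have h1 := ih h (by omega)
      have h2 := hw.2 v (by omega)
      omega

end RK

open RK in
/-- In a RoCK block: if `μ ∈ Par_e(ρ, r-1)` and `λ ∈ Par_e(ρ, r)` with
`μ ⊆ λ`, where `ρ` is a Rouquier core for `d` witnessed by `Ab_N(ρ)`, and
`λ \ μ` is a translate of the Young diagram of an `e`-hook partition
(Chuang–Kessar), then the top-left corner of `λ \ μ` has residue `-N mod e`. -/
theorem rock_skew_hook_corner_residue (e d N r : ℕ) (he : 2 ≤ e) (hd : 1 ≤ d)
    (hr1 : 1 ≤ r) (hrd : r ≤ d) (ρ μ lam : YoungDiagram)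
    (hrouq : IsRouquierWitness e d N ρ)
    (hμ : HasCoreAndWeight e (r - 1) ρ μ) (hlam : HasCoreAndWeight e r ρ lam)
    (hsub : μ ≤ lam)
    (htrans : ∃ (k a b : ℕ), 1 ≤ k ∧ k ≤ e ∧
      lam.cells \ μ.cells = (hookCells e k).image fun c => (c.1 + a, c.2 + b)) :
    ∀ c ∈ lam.cells \ μ.cells,
      (∀ c' ∈ lam.cells \ μ.cells, c.1 ≤ c'.1 ∧ c.2 ≤ c'.2) →
      boxRes e c = ((-(N : ℤ)) : ℤ) := by
  classical
  intro c hc hmin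
  obtain ⟨k, a, b, hk1, hke, hS⟩ := htrans
  have he0 : 1 ≤ e := by omega
  -- the corner is (a, b)
  have hab_mem : ((a : ℕ), (b : ℕ)) ∈ lam.cells \ μ.cells := by
    rw [hS]
    refine Finset.mem_image.2 ⟨(0, 0), ?_, by simp⟩
    unfold hookCells
    refine Finset.mem_union_right _ (Finset.mem_image.2 ⟨0, ?_, rfl⟩)
    rw [Finset.mem_range]
    omega
  have hcab : c = (a, b) := by
    obtain ⟨h1, h2⟩ := hmin _ hab_mem
    rw [hS] at hc
    obtain ⟨h0, _, hch⟩ := Finset.mem_image.1 hc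
    have hx := congrArg Prod.fst hch
    have hy := congrArg Prod.snd hch
    simp only at hx hy
    apply Prod.ext <;> simp <;> omega
  -- characterization of the skew cells
  have hchar : ∀ x y, (x, y) ∈ lam.cells \ μ.cells ↔
      ((x = a ∧ b ≤ y ∧ y < b + k) ∨ (a ≤ x ∧ x ≤ a + (e - k) ∧ y = b)) := by
    intro x y
    rw [hS]
    constructor
    · intro hm
      obtain ⟨h0, hh, hch⟩ := Finset.mem_image.1 hm
      have hx := congrArg Prod.fst hch
      have hy := congrArg Prod.snd hch
      simp only at hx hy
      unfold hookCells at hh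
      rcases Finset.mem_union.1 hh with h | h
      · obtain ⟨j0, hj0, hj⟩ := Finset.mem_image.1 h
        rw [Finset.mem_range] at hj0
        have e1 := congrArg Prod.fst hj
        have e2 := congrArg Prod.snd hj
        simp only at e1 e2
        left
        omega
      · obtain ⟨x0, hx0, hj⟩ := Finset.mem_image.1 h
        rw [Finset.mem_range] at hx0
        have e1 := congrArg Prod.fst hj
        have e2 := congrArg Prod.snd hj
        simp only at e1 e2
        right
        omega
    · rintro (⟨rfl, h1, h2⟩ | ⟨h1, h2, rfl⟩)
      · refine Finset.mem_image.2 ⟨(0, y - b), ?_, ?_⟩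
        · unfold hookCells
          exact Finset.mem_union_left _
            (Finset.mem_image.2 ⟨y - b, Finset.mem_range.2 (by omega), rfl⟩)
        · have : y - b + b = y := by omega
          simp [this]
      · refine Finset.mem_image.2 ⟨(x - a, 0), ?_, ?_⟩
        · unfold hookCells
          exact Finset.mem_union_right _
            (Finset.mem_image.2 ⟨x - a, Finset.mem_range.2 (by omega), rfl⟩)
        · have : x - a + a = x := by omega
          simp [this]
  have hrowchar : ∀ x y, (x, y) ∈ lam.cells \ μ.cells ↔
      (μ.rowLen x ≤ y ∧ y < lam.rowLen x) := fun x y => mem_diff_iff hsub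
  -- row length facts
  have hμa : μ.rowLen a = b := by
    have h2 := (hrowchar a b).1 ((hchar a b).2 (Or.inl ⟨rfl, le_rfl, by omega⟩))
    by_contra hne
    have h3 := (hchar a (μ.rowLen a)).1 ((hrowchar a (μ.rowLen a)).2 ⟨le_rfl, by omega⟩)
    omega
  have hLa : lam.rowLen a = b + k := by
    have h2 := (hrowchar a (b + k - 1)).1 ((hchar a (b + k - 1)).2 (Or.inl ⟨rfl, by omega, by omega⟩))
    by_contra hne
    have h3 := (hchar a (b + k)).1 ((hrowchar a (b + k)).2 ⟨by omega, by omega⟩)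
    omega
  have hmid : ∀ x, a < x → x ≤ a + (e - k) → μ.rowLen x = b ∧ lam.rowLen x = b + 1 := by
    intro x h1 h2
    have h3 := (hrowchar x b).1 ((hchar x b).2 (Or.inr ⟨by omega, h2, rfl⟩))
    constructor
    · by_contra hne
      have h5 := (hchar x (μ.rowLen x)).1 ((hrowchar x (μ.rowLen x)).2 ⟨le_rfl, by omega⟩)
      omega
    · by_contra hne
      have h5 := (hchar x (b + 1)).1 ((hrowchar x (b + 1)).2 ⟨by omega, by omega⟩)
      omega
  have hother : ∀ x, x < a ∨ a + (e - k) < x → lam.rowLen x = μ.rowLen x := by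
    intro x hx
    rcases le_or_gt (lam.rowLen x) (μ.rowLen x) with h | h
    · exact le_antisymm h (rowLen_le_of_le hsub x)
    · exfalso
      have h5 := (hchar x (μ.rowLen x)).1 ((hrowchar x (μ.rowLen x)).2 ⟨le_rfl, h⟩)
      omega
  -- enlarge the abacus
  set N' := N + r * e with hN'def
  have hrouq' : IsRouquierWitness e d N' ρ := witness_add_mul e d N r he0 ρ hrouq
  obtain ⟨hcore, chm, hm0, hmlast, hmsteps⟩ := hμ
  obtain ⟨_, chl, hl0, hllast, hlsteps⟩ := hlam
  have hcolL : lam.colLen 0 ≤ N' := by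
    have h1 := chain_colLen e r chl (fun j => hlsteps j)
    rw [hl0, hllast] at h1
    have h2 := hrouq.1
    omega
  have hcolμ : μ.colLen 0 ≤ N' := le_trans (colLen_le_of_le hsub) hcolL
  have hinv := chain_invariants e N' (r - 1) he0 chm hmsteps (by rw [hmlast]; exact hcolμ)
  rw [hmlast, hm0] at hinv
  obtain ⟨hrb, hhts⟩ := hinv
  have hρhts : hts e N' ρ = ∑ j ∈ Finset.range e, tri (runnerBeads e N' j ρ) :=
    core_hts e N' he0 ρ (fun p hp hpe => core_flush he0 hrouq'.1 hcore hp hpe)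
  -- the key beta numbers of μ
  have haN : a + (e - k) < N' := by
    have h1 : ((a + (e - k) : ℕ), (b : ℕ)) ∈ lam.cells \ μ.cells :=
      (hchar _ b).2 (Or.inr ⟨by omega, le_rfl, rfl⟩)
    have h2 : ((a + (e - k) : ℕ), (b : ℕ)) ∈ lam :=
      (YoungDiagram.mem_cells _).1 (Finset.mem_sdiff.1 h1).1
    exact lt_of_lt_of_le (row_lt_colLen h2) hcolL
  set m0 := b + (N' - 1 - (a + (e - k))) with hm0def
  have hβmid : ∀ x, a ≤ x → x ≤ a + (e - k) → bFn N' μ x = m0 + (a + (e - k) - x) := by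
    intro x h1 h2
    have hμrow : μ.rowLen x = b := by
      rcases eq_or_lt_of_le h1 with heq | hlt
      · rw [← heq]; exact hμa
      · exact (hmid x hlt h2).1
    unfold bFn
    rw [hμrow]
    omega
  have hin : ∀ s, s ≤ e - k → m0 + s ∈ betaSet N' μ := by
    intro s hs
    refine mem_betaSet.2 ⟨a + (e - k) - s, by omega, ?_⟩
    rw [hβmid (a + (e - k) - s) (by omega) (by omega)]
    omega
  have hβtop : ∀ x, x < a → m0 + e < bFn N' μ x := by
    intro x hx
    have h1 : b + k ≤ μ.rowLen x := by
      rw [← hother x (Or.inl hx), ← hLa]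
      exact lam.rowLen_anti x a hx.le
    unfold bFn
    omega
  have hout1 : ∀ s, e - k < s → s ≤ e → m0 + s ∉ betaSet N' μ := by
    intro s hs1 hs2 hmem
    obtain ⟨x, hx, hbx⟩ := mem_betaSet.1 hmem
    rcases lt_or_ge x a with h | h
    · have := hβtop x h
      omega
    · rcases le_or_gt x (a + (e - k)) with h' | h'
      · rw [hβmid x h h'] at hbx
        omega
      · have h2 : bFn N' μ x < bFn N' μ (a + (e - k)) := bFn_lt h' hx
        rw [hβmid (a + (e - k)) (by omega) le_rfl] at h2
        omega
  set B := betaSet N' μ with hBdef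
  set i := m0 % e with hidef
  set t := m0 / e with htdef
  have hit : e * t + i = m0 := by rw [htdef, hidef]; exact Nat.div_add_mod m0 e
  have hie : i < e := by rw [hidef]; exact Nat.mod_lt _ (by omega)
  have hm0B : m0 ∈ B := by
    have := hin 0 (by omega)
    rwa [Nat.add_zero] at this
  have hm0eB : m0 + e ∉ B := hout1 e (by omega) le_rfl
  -- the contradiction machine
  have hkey : ∀ u v s, u < e → v < e → u ≠ v →
      runnerBeads e N' u ρ + (d - 1) ≤ runnerBeads e N' v ρ →
      e * s + u ∈ B → e * s + v ∉ B → False := by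
    intro u v s hu hv huv hD hbead hgap
    have hDB : ((B.filter fun m => m % e = u).card) + (d - 1) ≤
        (B.filter fun m => m % e = v).card := by
      have h1 : (B.filter fun m => m % e = u).card = runnerBeads e N' u μ := rfl
      have h2 : (B.filter fun m => m % e = v).card = runnerBeads e N' v μ := rfl
      rw [h1, h2, hrb u, hrb v]
      exact hD
    have htb := total_bound e he0 B u v s (d - 1) hbead hgap hu hv huv hDB
    have hBsum : ∑ m ∈ B, m / e = hts e N' μ := rfl
    have hTsum : ∑ j ∈ Finset.range e, tri ((B.filter fun m => m % e = j).card)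
        = ∑ j ∈ Finset.range e, tri (runnerBeads e N' j ρ) := by
      apply Finset.sum_congr rfl
      intro j _
      rw [show (B.filter fun m => m % e = j).card = runnerBeads e N' j μ from rfl, hrb j]
    rw [hBsum, hTsum] at htb
    rw [hhts, hρhts] at htb
    omega
  -- determine the runner
  have hki : k - 1 = i := by
    by_contra hne
    rcases lt_or_gt_of_ne hne with hlt | hgt
    · -- k - 1 < i, so k ≤ i and i ≥ 1
      have h1 : m0 + (e - i) ∈ B := hin (e - i) (by omega)
      have h2 : e * (t + 1) + 0 = m0 + (e - i) := by
        have hmul : e * (t + 1) = e * t + e := by ring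
        rw [hmul]
        obtain ⟨P, hP⟩ : ∃ P, e * t = P := ⟨_, rfl⟩
        rw [hP]
        rw [hP] at hit
        omega
      have h3 : e * (t + 1) + i = m0 + e := by
        have hmul : e * (t + 1) = e * t + e := by ring
        rw [hmul]
        obtain ⟨P, hP⟩ : ∃ P, e * t = P := ⟨_, rfl⟩
        rw [hP]
        rw [hP] at hit
        omega
      have hD := runner_chain hrouq' 0 i (by omega) hie
      exact hkey 0 i (t + 1) (by omega) hie (by omega) hD (h2 ▸ h1) (h3 ▸ hm0eB)
    · -- k - 1 > i, so i ≤ e - 2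
      have hiek : e - k < e - 1 - i := by omega
      have h1 : m0 + (e - 1 - i) ∉ B := hout1 (e - 1 - i) hiek (by omega)
      have h2 : e * t + (e - 1) = m0 + (e - 1 - i) := by
        obtain ⟨P, hP⟩ : ∃ P, e * t = P := ⟨_, rfl⟩
        rw [hP]
        rw [hP] at hit
        omega
      have hD := runner_chain hrouq' i (e - 1) (by omega) (by omega)
      exact hkey i (e - 1) t hie (by omega) (by omega) hD (hit ▸ hm0B) (h2 ▸ h1)
  -- final residue computation
  have hfinal : (b : ℤ) - (a : ℤ) = -(N : ℤ) + (e : ℤ) * ((t : ℤ) + 1 - (r : ℤ)) := by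
    obtain ⟨P, hP⟩ : ∃ P, e * t = P := ⟨_, rfl⟩
    obtain ⟨Q, hQ⟩ : ∃ Q, r * e = Q := ⟨_, rfl⟩
    rw [hP] at hit
    rw [hQ] at hN'def
    have hlin : (b : ℤ) - a + N + (Q : ℤ) = (P : ℤ) + e := by omega
    have hPc : (P : ℤ) = (e : ℤ) * t := by rw [← hP]; push_cast; ring
    have hQc : (Q : ℤ) = (r : ℤ) * e := by rw [← hQ]; push_cast; ring
    have hexp : (e : ℤ) * ((t : ℤ) + 1 - (r : ℤ)) = (e : ℤ) * t + e - (r : ℤ) * e := by ring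
    rw [hexp]
    rw [hPc, hQc] at hlin
    linarith
  rw [hcab]
  show ((((b : ℤ) - (a : ℤ)) : ℤ) : ZMod e) = ((-(N : ℤ) : ℤ) : ZMod e)
  rw [hfinal]
  push_cast
  rw [ZMod.natCast_self]
  ring
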